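/- Let P = (U⊗V) Λ (U⊗V)^H where U ∈ ℂ^{N_t×N_t} and V ∈ ℂ^{N_r×N_r} are unitary and Λ = diag(Λ_1,…,Λ_{N_t}) with diagonal nonnegative blocks Λ_i of size N_r. For the pilot matrix S = √ρ (u_i ⊗ I_{N_r}) where u_i is the i-th column of U and ρ, σ² > 0, the Kalman measurement update P' = P − P S (S^H P S + σ² I_{N_r})^{-1} S^H P satisfies P' = (U⊗V)(Λ − (e_i e_i^T) ⊗ [ρ Λ_i (ρΛ_i + σ² I)^{-1} Λ_i])(U⊗V)^H, so that the i-th block of the eigenvalue matrix becomes σ²(ρΛ_i + σ²I)^{-1}Λ_i and all other blocks are unchanged. -/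

import Mathlib

open Matrix Kronecker

lemma kron_conjT {l m n p : Type*} (A : Matrix l m ℂ) (B : Matrix n p ℂ) :
    (A ⊗ₖ B)ᴴ = Aᴴ ⊗ₖ Bᴴ := by
  ext ⟨a, b⟩ ⟨c, d⟩
  simp [conjTranspose_apply, kroneckerMap_apply, mul_comm]

lemma diag_mul_kron {Nt Nr : ℕ} {m m' : Type*} (l : Fin Nt → Fin Nr → ℂ) (i : Fin Nt)
    (B : Matrix (Fin Nt) m ℂ) (hB : ∀ t j, t ≠ i → B t j = 0)
    (C : Matrix (Fin Nr) m' ℂ) :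
    Matrix.diagonal (fun x : Fin Nt × Fin Nr => l x.1 x.2) * (B ⊗ₖ C) =
      B ⊗ₖ (Matrix.diagonal (l i) * C) := by
  ext ⟨t, a⟩ ⟨j, b⟩
  simp only [Matrix.diagonal_mul, kroneckerMap_apply]
  by_cases h : t = i
  · subst h; ring
  · rw [hB t j h]; ring

lemma kron_mul_diag {Nt Nr : ℕ} {m m' : Type*} (l : Fin Nt → Fin Nr → ℂ) (i : Fin Nt)
    (B : Matrix m (Fin Nt) ℂ) (hB : ∀ j t, t ≠ i → B j t = 0)
    (C : Matrix m' (Fin Nr) ℂ) :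
    (B ⊗ₖ C) * Matrix.diagonal (fun x : Fin Nt × Fin Nr => l x.1 x.2) =
      B ⊗ₖ (C * Matrix.diagonal (l i)) := by
  ext ⟨t, a⟩ ⟨j, b⟩
  simp only [Matrix.mul_diagonal, kroneckerMap_apply]
  by_cases h : j = i
  · subst h; ring
  · rw [hB t j h]; ring

set_option maxHeartbeats 1000000 in
/-- the Kalman measurement update with pilot `S = √ρ (u_i ⊗ I)` only
changes the `i`-th diagonal block of the eigenvalue matrix. -/
theorem stmt2 {Nt Nr : ℕ}
    (U : Matrix (Fin Nt) (Fin Nt) ℂ) (V : Matrix (Fin Nr) (Fin Nr) ℂ)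
    (hU : Uᴴ * U = 1 ∧ U * Uᴴ = 1) (hV : Vᴴ * V = 1 ∧ V * Vᴴ = 1)
    (l : Fin Nt → Fin Nr → ℝ) (hl : ∀ i r, 0 ≤ l i r)
    (ρ σ2 : ℝ) (hρ : 0 < ρ) (hσ : 0 < σ2) (i : Fin Nt)
    (P : Matrix (Fin Nt × Fin Nr) (Fin Nt × Fin Nr) ℂ)
    (hP : P = (U ⊗ₖ V) * Matrix.diagonal (fun x => (l x.1 x.2 : ℂ)) * (U ⊗ₖ V)ᴴ)
    (S : Matrix (Fin Nt × Fin Nr) (Fin 1 × Fin Nr) ℂ)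
    (hS : S = (Real.sqrt ρ : ℂ) •
      ((Matrix.of fun k (_ : Fin 1) => U k i) ⊗ₖ (1 : Matrix (Fin Nr) (Fin Nr) ℂ))) :
    P - P * S * (Sᴴ * P * S + (σ2 : ℂ) • 1)⁻¹ * Sᴴ * P =
      (U ⊗ₖ V) *
        (Matrix.diagonal (fun x => (l x.1 x.2 : ℂ)) -
          (Matrix.single i i (1 : ℂ)) ⊗ₖ
            Matrix.diagonal (fun r => ((ρ * (l i r) ^ 2 / (ρ * l i r + σ2) : ℝ) : ℂ))) *
        (U ⊗ₖ V)ᴴ ∧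
    ∀ r, l i r - ρ * (l i r) ^ 2 / (ρ * l i r + σ2) = σ2 * l i r / (ρ * l i r + σ2) := by
  have hden : ∀ r, (ρ * l i r + σ2) ≠ 0 := by
    intro r
    have h1 : 0 ≤ ρ * l i r := mul_nonneg hρ.le (hl i r)
    have : 0 < ρ * l i r + σ2 := by linarith
    exact ne_of_gt this
  constructor
  · -- matrix part
    set W := U ⊗ₖ V with hW
    set Λ := Matrix.diagonal (fun x : Fin Nt × Fin Nr => (l x.1 x.2 : ℂ)) with hΛ
    set Di := Matrix.diagonal (fun r => (l i r : ℂ)) with hDi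
    set E : Matrix (Fin Nt) (Fin 1) ℂ := Matrix.of fun k _ => U k i with hE
    set Ei : Matrix (Fin Nt) (Fin 1) ℂ := Matrix.of fun k _ => if k = i then 1 else 0 with hEi
    have hEit : ∀ t j, t ≠ i → Ei t j = 0 := by
      intro t j h; simp [hEi, h]
    have hEict : ∀ j t, t ≠ i → Eiᴴ j t = 0 := by
      intro j t h; simp [hEi, conjTranspose_apply, h]
    have hUE : Uᴴ * E = Ei := by
      ext k j
      have h1 : (Uᴴ * U) k i = (1 : Matrix (Fin Nt) (Fin Nt) ℂ) k i := by rw [hU.1]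
      simp only [Matrix.mul_apply, Matrix.conjTranspose_apply, Matrix.one_apply] at h1 ⊢
      simpa [hE, hEi] using h1
    have hEiEi : Eiᴴ * Ei = (1 : Matrix (Fin 1) (Fin 1) ℂ) := by
      ext j k
      simp only [Matrix.mul_apply, Matrix.conjTranspose_apply, hEi, Matrix.of_apply]
      rw [Subsingleton.elim j k]
      simp [Matrix.one_apply, apply_ite (star : ℂ → ℂ)]
    have hEiEiT : Ei * Eiᴴ = Matrix.single i i (1 : ℂ) := by
      ext t s
      simp only [Matrix.mul_apply, Matrix.conjTranspose_apply, hEi, Matrix.of_apply,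
        Fin.sum_univ_succ, Finset.univ_unique, Finset.sum_singleton,
        Matrix.single, Matrix.of_apply, apply_ite (star : ℂ → ℂ), star_one, star_zero]
      by_cases h1 : t = i <;> by_cases h2 : s = i <;>
        simp_all [eq_comm]
    -- conj transpose of W
    have hWc : Wᴴ = Uᴴ ⊗ₖ Vᴴ := kron_conjT U V
    -- W^H S and S^H W
    have hWS : Wᴴ * S = (Real.sqrt ρ : ℂ) • (Ei ⊗ₖ Vᴴ) := by
      rw [hS, hWc, Matrix.mul_smul, ← Matrix.mul_kronecker_mul, hUE, Matrix.mul_one]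
    have hSW : Sᴴ * W = (Real.sqrt ρ : ℂ) • (Eiᴴ ⊗ₖ V) := by
      have : Sᴴ = (Real.sqrt ρ : ℂ) • (Eᴴ ⊗ₖ (1 : Matrix (Fin Nr) (Fin Nr) ℂ)) := by
        rw [hS, Matrix.conjTranspose_smul, kron_conjT]
        simp [Complex.star_def, Complex.conj_ofReal]
      rw [this, Matrix.smul_mul, hW, ← Matrix.mul_kronecker_mul, Matrix.one_mul]
      have : Eᴴ * U = Eiᴴ := by
        rw [← hUE, Matrix.conjTranspose_mul, Matrix.conjTranspose_conjTranspose]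
      rw [this]
    -- diagonal interchange
    have hΛE : Λ * (Ei ⊗ₖ Vᴴ) = Ei ⊗ₖ (Di * Vᴴ) :=
      diag_mul_kron (fun t r => (l t r : ℂ)) i Ei hEit Vᴴ
    have hEΛ : (Eiᴴ ⊗ₖ V) * Λ = Eiᴴ ⊗ₖ (V * Di) :=
      kron_mul_diag (fun t r => (l t r : ℂ)) i Eiᴴ hEict V
    have hsq : (Real.sqrt ρ : ℂ) * (Real.sqrt ρ : ℂ) = (ρ : ℂ) := by
      rw [← Complex.ofReal_mul, Real.mul_self_sqrt hρ.le]
    -- the middle matrix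
    have hmid : Sᴴ * P * S + (σ2 : ℂ) • 1 =
        (1 : Matrix (Fin 1) (Fin 1) ℂ) ⊗ₖ
          (V * Matrix.diagonal (fun r => ((ρ * l i r + σ2 : ℝ) : ℂ)) * Vᴴ) := by
      have h1 : Sᴴ * P * S = (ρ : ℂ) • ((1 : Matrix (Fin 1) (Fin 1) ℂ) ⊗ₖ (V * Di * Vᴴ)) := by
        rw [hP]
        calc Sᴴ * (W * Λ * Wᴴ) * S
            = (Sᴴ * W) * Λ * (Wᴴ * S) := by simp only [Matrix.mul_one, Matrix.mul_assoc]
          _ = ((Real.sqrt ρ : ℂ) • (Eiᴴ ⊗ₖ V)) * Λ * ((Real.sqrt ρ : ℂ) • (Ei ⊗ₖ Vᴴ)) := by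
              rw [hWS, hSW]
          _ = ((Real.sqrt ρ : ℂ) * (Real.sqrt ρ : ℂ)) •
              ((Eiᴴ ⊗ₖ V) * Λ * (Ei ⊗ₖ Vᴴ)) := by
              rw [Matrix.smul_mul, Matrix.smul_mul, Matrix.mul_smul, smul_smul]
          _ = (ρ : ℂ) • ((Eiᴴ ⊗ₖ (V * Di)) * (Ei ⊗ₖ Vᴴ)) := by rw [hsq, hEΛ]
          _ = (ρ : ℂ) • ((1 : Matrix (Fin 1) (Fin 1) ℂ) ⊗ₖ (V * Di * Vᴴ)) := by
              rw [← Matrix.mul_kronecker_mul, hEiEi]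
      rw [h1]
      have h2 : V * Matrix.diagonal (fun r => ((ρ * l i r + σ2 : ℝ) : ℂ)) * Vᴴ =
          (ρ : ℂ) • (V * Di * Vᴴ) + (σ2 : ℂ) • (1 : Matrix (Fin Nr) (Fin Nr) ℂ) := by
        have hd : Matrix.diagonal (fun r => ((ρ * l i r + σ2 : ℝ) : ℂ)) =
            (ρ : ℂ) • Di + (σ2 : ℂ) • (1 : Matrix (Fin Nr) (Fin Nr) ℂ) := by
          ext a b
          by_cases h : a = b <;>
            simp [Matrix.diagonal_apply, Matrix.one_apply, hDi, h] <;> push_cast <;> ring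
        rw [hd]
        rw [Matrix.mul_add, Matrix.add_mul]
        congr 1
        · simp [Matrix.mul_smul, Matrix.smul_mul, Matrix.mul_assoc]
        · rw [Matrix.mul_smul, Matrix.smul_mul, Matrix.mul_one, hV.2]
      rw [h2, kronecker_add, kronecker_smul, kronecker_smul, one_kronecker_one]
    -- inverse of the middle matrix
    have hinv : (Sᴴ * P * S + (σ2 : ℂ) • 1)⁻¹ =
        (1 : Matrix (Fin 1) (Fin 1) ℂ) ⊗ₖ
          (V * Matrix.diagonal (fun r => (((ρ * l i r + σ2 : ℝ) : ℂ))⁻¹) * Vᴴ) := by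
      apply Matrix.inv_eq_right_inv
      rw [hmid, ← Matrix.mul_kronecker_mul, Matrix.one_mul]
      have : V * Matrix.diagonal (fun r => ((ρ * l i r + σ2 : ℝ) : ℂ)) * Vᴴ *
          (V * Matrix.diagonal (fun r => (((ρ * l i r + σ2 : ℝ) : ℂ))⁻¹) * Vᴴ) =
          (1 : Matrix (Fin Nr) (Fin Nr) ℂ) := by
        calc V * Matrix.diagonal (fun r => ((ρ * l i r + σ2 : ℝ) : ℂ)) * Vᴴ *
            (V * Matrix.diagonal (fun r => (((ρ * l i r + σ2 : ℝ) : ℂ))⁻¹) * Vᴴ)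
            = V * Matrix.diagonal (fun r => ((ρ * l i r + σ2 : ℝ) : ℂ)) * (Vᴴ * V) *
              Matrix.diagonal (fun r => (((ρ * l i r + σ2 : ℝ) : ℂ))⁻¹) * Vᴴ := by
              simp only [Matrix.mul_one, Matrix.mul_assoc]
          _ = V * (Matrix.diagonal (fun r => ((ρ * l i r + σ2 : ℝ) : ℂ)) *
              Matrix.diagonal (fun r => (((ρ * l i r + σ2 : ℝ) : ℂ))⁻¹)) * Vᴴ := by
              rw [hV.1, Matrix.mul_one]; simp only [Matrix.mul_one, Matrix.mul_assoc]
          _ = V * Vᴴ := by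
              rw [Matrix.diagonal_mul_diagonal]
              have : (fun r => ((ρ * l i r + σ2 : ℝ) : ℂ) * (((ρ * l i r + σ2 : ℝ) : ℂ))⁻¹) =
                  fun _ => (1 : ℂ) := by
                funext r
                rw [mul_inv_cancel₀]
                exact_mod_cast Complex.ofReal_ne_zero.mpr (hden r)
              rw [this, Matrix.diagonal_one, Matrix.mul_one]
          _ = 1 := hV.2
      rw [this, one_kronecker_one]
    -- now assemble
    have hPS : P * S = (Real.sqrt ρ : ℂ) • (W * (Ei ⊗ₖ (Di * Vᴴ))) := by
      rw [hP]
      calc W * Λ * Wᴴ * S = W * (Λ * (Wᴴ * S)) := by simp only [Matrix.mul_one, Matrix.mul_assoc]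
        _ = W * (Λ * ((Real.sqrt ρ : ℂ) • (Ei ⊗ₖ Vᴴ))) := by rw [hWS]
        _ = (Real.sqrt ρ : ℂ) • (W * (Ei ⊗ₖ (Di * Vᴴ))) := by
            rw [Matrix.mul_smul, hΛE, Matrix.mul_smul]
    have hSP : Sᴴ * P = (Real.sqrt ρ : ℂ) • ((Eiᴴ ⊗ₖ (V * Di)) * Wᴴ) := by
      rw [hP]
      calc Sᴴ * (W * Λ * Wᴴ) = ((Sᴴ * W) * Λ) * Wᴴ := by simp only [Matrix.mul_one, Matrix.mul_assoc]
        _ = (((Real.sqrt ρ : ℂ) • (Eiᴴ ⊗ₖ V)) * Λ) * Wᴴ := by rw [hSW]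
        _ = (Real.sqrt ρ : ℂ) • ((Eiᴴ ⊗ₖ (V * Di)) * Wᴴ) := by
            rw [Matrix.smul_mul, hEΛ, Matrix.smul_mul]
    have hcentral :
        P * S * (Sᴴ * P * S + (σ2 : ℂ) • 1)⁻¹ * Sᴴ * P =
          W * ((Matrix.single i i (1 : ℂ)) ⊗ₖ
            Matrix.diagonal (fun r => ((ρ * (l i r) ^ 2 / (ρ * l i r + σ2) : ℝ) : ℂ))) * Wᴴ := by
      rw [hinv]
      calc P * S * ((1 : Matrix (Fin 1) (Fin 1) ℂ) ⊗ₖ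
              (V * Matrix.diagonal (fun r => (((ρ * l i r + σ2 : ℝ) : ℂ))⁻¹) * Vᴴ)) * Sᴴ * P
          = (P * S) * ((1 : Matrix (Fin 1) (Fin 1) ℂ) ⊗ₖ
              (V * Matrix.diagonal (fun r => (((ρ * l i r + σ2 : ℝ) : ℂ))⁻¹) * Vᴴ)) * (Sᴴ * P) := by
            simp only [Matrix.mul_one, Matrix.mul_assoc]
        _ = ((Real.sqrt ρ : ℂ) * (Real.sqrt ρ : ℂ)) •
            (W * ((Ei ⊗ₖ (Di * Vᴴ)) * ((1 : Matrix (Fin 1) (Fin 1) ℂ) ⊗ₖ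
              (V * Matrix.diagonal (fun r => (((ρ * l i r + σ2 : ℝ) : ℂ))⁻¹) * Vᴴ)) *
              (Eiᴴ ⊗ₖ (V * Di))) * Wᴴ) := by
            rw [hPS, hSP]
            simp only [Matrix.smul_mul, Matrix.mul_smul, smul_smul]
            congr 1
            simp only [Matrix.mul_one, Matrix.mul_assoc]
        _ = (ρ : ℂ) • (W * ((Ei * (1 : Matrix (Fin 1) (Fin 1) ℂ) * Eiᴴ) ⊗ₖ
              ((Di * Vᴴ) * (V * Matrix.diagonal (fun r => (((ρ * l i r + σ2 : ℝ) : ℂ))⁻¹) * Vᴴ) *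
              (V * Di))) * Wᴴ) := by
            rw [hsq, ← Matrix.mul_kronecker_mul, ← Matrix.mul_kronecker_mul]
        _ = W * ((Matrix.single i i (1 : ℂ)) ⊗ₖ
              Matrix.diagonal (fun r => ((ρ * (l i r) ^ 2 / (ρ * l i r + σ2) : ℝ) : ℂ))) * Wᴴ := by
            rw [Matrix.mul_one, hEiEiT]
            have hmidd : (Di * Vᴴ) *
                (V * Matrix.diagonal (fun r => (((ρ * l i r + σ2 : ℝ) : ℂ))⁻¹) * Vᴴ) * (V * Di) =
                Matrix.diagonal (fun r =>
                  (l i r : ℂ) * (((ρ * l i r + σ2 : ℝ) : ℂ))⁻¹ * (l i r : ℂ)) := by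
              calc (Di * Vᴴ) *
                  (V * Matrix.diagonal (fun r => (((ρ * l i r + σ2 : ℝ) : ℂ))⁻¹) * Vᴴ) * (V * Di)
                  = Di * (Vᴴ * V) * Matrix.diagonal (fun r => (((ρ * l i r + σ2 : ℝ) : ℂ))⁻¹) *
                    (Vᴴ * V) * Di := by simp only [Matrix.mul_one, Matrix.mul_assoc]
                _ = Di * Matrix.diagonal (fun r => (((ρ * l i r + σ2 : ℝ) : ℂ))⁻¹) * Di := by
                    rw [hV.1]; simp only [Matrix.mul_one, Matrix.mul_assoc]
                _ = _ := by
                    rw [hDi, Matrix.diagonal_mul_diagonal, Matrix.diagonal_mul_diagonal]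
            rw [hmidd]
            have : (ρ : ℂ) • ((Matrix.single i i (1 : ℂ)) ⊗ₖ
                Matrix.diagonal (fun r =>
                  (l i r : ℂ) * (((ρ * l i r + σ2 : ℝ) : ℂ))⁻¹ * (l i r : ℂ))) =
                (Matrix.single i i (1 : ℂ)) ⊗ₖ
                  Matrix.diagonal (fun r => ((ρ * (l i r) ^ 2 / (ρ * l i r + σ2) : ℝ) : ℂ)) := by
              ext ⟨t, a⟩ ⟨s, b⟩
              simp only [Matrix.smul_apply, kroneckerMap_apply, smul_eq_mul]
              by_cases h : a = b
              · subst h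
                simp only [Matrix.diagonal_apply_eq]
                push_cast
                rw [div_eq_mul_inv]
                ring
              · simp [Matrix.diagonal_apply_ne _ h]
            rw [← this]
            simp only [Matrix.smul_mul, Matrix.mul_smul]
    rw [hcentral, hP, hW]
    rw [Matrix.mul_sub, Matrix.sub_mul]
  · -- scalar part
    intro r
    have h := hden r
    rw [sub_eq_iff_eq_add, ← add_div, eq_div_iff h]
    ring
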